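/- Let S be a commutative semiring and M an S-semimodule with Property (A). Then for every polynomial f ∈ S[X], f is M[X]-regular (not a zero-divisor on M[X]) if and only if the content ideal c(f) is M-regular (contains an element that is not a zero-divisor on M). Conversely, if this equivalence holds for all f ∈ S[X], then M has Property (A). -/

import Mathlib

/-- The convolution action of a polynomial `f ∈ S[X]` on a "polynomial"
`g ∈ M[X]` (represented as a finitely supported function `ℕ →₀ M`). -/
noncomputable def polyAct {S M : Type*} [CommSemiring S] [AddCommMonoid M] [Module S M]
    (f : Polynomial S) (g : ℕ →₀ M) : ℕ →₀ M :=
  f.sum fun n s => g.sum fun k m => Finsupp.single (n + k) (s • m)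

/-- The content of a polynomial `f ∈ S[X]`: the ideal of `S` generated by the
coefficients of `f`. -/
noncomputable def polyContent {S : Type*} [CommSemiring S] (f : Polynomial S) : Ideal S :=
  Ideal.span (Set.range f.coeff)

/-- The set of zero-divisors of `S` on the semimodule `M`. -/
def zdSet (S : Type*) (M : Type*) [CommSemiring S] [AddCommMonoid M] [Module S M] : Set S :=
  {s : S | ∃ m : M, m ≠ 0 ∧ s • m = 0}

/-- An `S`-semimodule `M` has Property (A) if every finitely generated ideal of `S`
consisting of zero-divisors on `M` has a nonzero annihilator in `M`. -/
def PropertyA (S : Type*) (M : Type*) [CommSemiring S] [AddCommMonoid M] [Module S M] : Prop :=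
  ∀ I : Ideal S, I.FG → (I : Set S) ⊆ zdSet S M →
    ∃ m : M, m ≠ 0 ∧ ∀ s ∈ I, s • m = 0


open Finset Polynomial

section Aux

variable {S M : Type*} [CommSemiring S] [AddCommMonoid M] [Module S M]

lemma polyAct_apply (f : Polynomial S) (g : ℕ →₀ M) (j : ℕ) :
    polyAct f g j = ∑ p ∈ Finset.HasAntidiagonal.antidiagonal j, f.coeff p.1 • g p.2 := by
  rw [polyAct, Polynomial.sum, Finset.sum_apply']
  have h1 : ∀ n ∈ f.support, (g.sum fun k m => Finsupp.single (n + k) (f.coeff n • m)) j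
      = ∑ k ∈ g.support, if n + k = j then f.coeff n • g k else 0 := by
    intro n _
    rw [Finsupp.sum, Finset.sum_apply']
    refine Finset.sum_congr rfl fun k _ => ?_
    rw [Finsupp.single_apply]
  rw [Finset.sum_congr rfl h1, ← Finset.sum_product', ← Finset.sum_filter]
  apply Finset.sum_subset
  · intro p hp
    rw [Finset.mem_filter] at hp
    simpa using hp.2
  · intro p hp hnp
    rw [Finset.HasAntidiagonal.mem_antidiagonal] at hp
    rw [Finset.mem_filter, Finset.mem_product] at hnp
    rcases not_and_or.mp (fun hc => hnp ⟨hc, hp⟩) with h | h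
    · rw [Polynomial.notMem_support_iff.mp h, zero_smul]
    · rw [Finsupp.notMem_support_iff.mp h, smul_zero]

lemma polyAct_smul (f : Polynomial S) (c : S) (g : ℕ →₀ M) :
    polyAct f (c • g) = c • polyAct f g := by
  ext j
  rw [Finsupp.smul_apply, polyAct_apply, polyAct_apply, Finset.smul_sum]
  refine Finset.sum_congr rfl fun p _ => ?_
  rw [Finsupp.smul_apply, smul_smul, smul_smul, mul_comm]

lemma mccoy (f : Polynomial S) :
    ∀ d : ℕ, ∀ g : ℕ →₀ M, g ≠ 0 → g.support.sup id ≤ d → polyAct f g = 0 →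
      ∃ m : M, m ≠ 0 ∧ ∀ i, f.coeff i • m = 0 := by
  intro d
  induction d using Nat.strong_induction_on with
  | _ d ih =>
    intro g hg hd hfg
    classical
    have hne : g.support.Nonempty := Finsupp.support_nonempty_iff.mpr hg
    set e := g.support.max' hne with he_def
    have he : e ∈ g.support := g.support.max'_mem hne
    have htop : ∀ k ∈ g.support, k ≤ e := fun k hk => g.support.le_max' k hk
    by_cases H : ∀ i, f.coeff i • g = (0 : ℕ →₀ M)
    · refine ⟨g e, Finsupp.mem_support_iff.mp he, fun i => ?_⟩
      have := congrFun (congrArg DFunLike.coe (H i)) e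
      simpa using this
    · push_neg at H
      obtain ⟨i0, hi0⟩ := H
      have hi0s : i0 ∈ f.support := by
        rw [Polynomial.mem_support_iff]
        intro hc
        rw [hc, zero_smul] at hi0
        exact hi0 rfl
      have hTne : (f.support.filter fun i => f.coeff i • g ≠ 0).Nonempty :=
        ⟨i0, Finset.mem_filter.mpr ⟨hi0s, hi0⟩⟩
      set T := f.support.filter fun i => f.coeff i • g ≠ 0 with hT_def
      set i := T.max' hTne with hi_def
      have hiT : i ∈ T := T.max'_mem hTne
      have hig : f.coeff i • g ≠ 0 := (Finset.mem_filter.mp hiT).2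
      have hmax : ∀ j, i < j → f.coeff j • g = 0 := by
        intro j hj
        by_contra hc
        have hjs : j ∈ f.support := by
          rw [Polynomial.mem_support_iff]
          intro h0; rw [h0, zero_smul] at hc; exact hc rfl
        exact absurd (T.le_max' j (Finset.mem_filter.mpr ⟨hjs, hc⟩)) (not_le.mpr hj)
      -- key: f.coeff i • g e = 0
      have hkey : f.coeff i • g e = 0 := by
        have h0 : polyAct f g (i + e) = 0 := by rw [hfg]; rfl
        rw [polyAct_apply] at h0
        rw [Finset.sum_eq_single (i, e)] at h0
        · exact h0
        · intro p hp hpne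
          rw [Finset.HasAntidiagonal.mem_antidiagonal] at hp
          rcases lt_trichotomy p.1 i with h | h | h
          · have : e < p.2 := by omega
            rw [Finsupp.notMem_support_iff.mp (fun hc => absurd (htop _ hc) (not_le.mpr this)),
              smul_zero]
          · have : p.2 = e := by omega
            exact absurd (Prod.ext h this) hpne
          · have := hmax p.1 h
            have := congrFun (congrArg DFunLike.coe this) p.2
            simpa using this
        · intro hc
          exact absurd (Finset.HasAntidiagonal.mem_antidiagonal.mpr (rfl : (i, e).1 + (i, e).2 = i + e)) hc
      set g' := f.coeff i • g with hg'_def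
      have hsup' : g'.support ⊆ g.support := Finsupp.support_smul
      have he' : e ∉ g'.support := by
        rw [Finsupp.notMem_support_iff, hg'_def, Finsupp.smul_apply]
        exact hkey
      have hlt : g'.support.sup id < d := by
        have hne' : g'.support.Nonempty := Finsupp.support_nonempty_iff.mpr hig
        obtain ⟨k, hk⟩ := hne'
        have hklt : ∀ k ∈ g'.support, k < e := by
          intro k hk
          exact lt_of_le_of_ne (htop k (hsup' hk)) (fun hc => he' (hc ▸ hk))
        have hed : e ≤ d := le_trans (Finset.le_sup (f := id) he) hd
        have h0d : 0 < d := lt_of_le_of_lt (Nat.zero_le k) (lt_of_lt_of_le (hklt k hk) hed)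
        rw [Finset.sup_lt_iff (by simpa using h0d)]
        intro b hb
        exact lt_of_lt_of_le (hklt b hb) hed
      exact ih _ hlt g' hig le_rfl (by rw [hg'_def, polyAct_smul, hfg, smul_zero])

/-- The annihilator of an element as an ideal. -/
def annIdeal (m : M) : Ideal S where
  carrier := {t : S | t • m = 0}
  add_mem' := by intro a b ha hb; simp only [Set.mem_setOf_eq] at *; rw [add_smul, ha, hb, add_zero]
  zero_mem' := by simp
  smul_mem' := by
    intro c x hx; simp only [Set.mem_setOf_eq, smul_eq_mul] at *
    rw [mul_smul, hx, smul_zero]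

lemma polyAct_single_zero (f : Polynomial S) (m : M) (h : ∀ i, f.coeff i • m = 0) :
    polyAct f (Finsupp.single 0 m) = 0 := by
  rw [polyAct, Polynomial.sum]
  apply Finset.sum_eq_zero
  intro n _
  show (Finsupp.single 0 m).sum (fun k m' => Finsupp.single (n + k) (f.coeff n • m')) = 0
  rw [Finsupp.sum_single_index (by simp), h n, Finsupp.single_zero]

lemma polyContent_fg (f : Polynomial S) : (polyContent f).FG := by
  classical
  refine ⟨f.support.image f.coeff, le_antisymm ?_ ?_⟩
  · rw [Ideal.span_le]
    intro s hs
    obtain ⟨n, _, rfl⟩ := Finset.mem_image.mp (Finset.mem_coe.mp hs)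
    exact Ideal.subset_span ⟨n, rfl⟩
  · rw [polyContent, Ideal.span_le]
    rintro _ ⟨n, rfl⟩
    by_cases h : n ∈ f.support
    · exact Ideal.subset_span (Finset.mem_coe.mpr (Finset.mem_image_of_mem _ h))
    · rw [Polynomial.notMem_support_iff.mp h]
      exact (Ideal.span _).zero_mem

end Aux

/-- `M` has Property (A) if and only if, for every `f ∈ S[X]`, `f` is
`M[X]`-regular exactly when its content ideal `c(f)` is `M`-regular. -/
theorem propertyA_iff_regular {S M : Type*} [CommSemiring S] [AddCommMonoid M] [Module S M] :
    PropertyA S M ↔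
      ∀ f : Polynomial S,
        ((∀ g : ℕ →₀ M, g ≠ 0 → polyAct f g ≠ 0) ↔ ∃ s ∈ polyContent f, s ∉ zdSet S M) := by
  constructor
  · intro hA f
    constructor
    · intro hreg
      by_contra hc
      push_neg at hc
      obtain ⟨m, hm, hann⟩ := hA _ (polyContent_fg f) hc
      have h0 : polyAct f (Finsupp.single 0 m) = 0 :=
        polyAct_single_zero f m fun i => hann _ (Ideal.subset_span ⟨i, rfl⟩)
      exact hreg _ (by simpa using hm) h0
    · rintro ⟨s, hs, hns⟩ g hg hfg
      obtain ⟨m, hm, hann⟩ := mccoy f (g.support.sup id) g hg le_rfl hfg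
      apply hns
      refine ⟨m, hm, ?_⟩
      have hle : polyContent f ≤ annIdeal m := by
        rw [polyContent, Ideal.span_le]
        rintro _ ⟨n, rfl⟩
        exact hann n
      exact hle hs
  · intro hiff I hFG hsub
    classical
    obtain ⟨T, hT⟩ := hFG
    set l := T.toList with hl
    set f : Polynomial S := ∑ j ∈ Finset.range l.length, Polynomial.monomial j (l.getD j 0)
      with hf
    have hcoeff : ∀ j, f.coeff j = l.getD j 0 := by
      intro j
      rw [hf, Polynomial.finset_sum_coeff]
      by_cases h : j < l.length
      · rw [Finset.sum_eq_single j]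
        · simp
        · intro b _ hb; rw [Polynomial.coeff_monomial, if_neg hb]
        · intro hc; exact absurd (Finset.mem_range.mpr h) hc
      · rw [List.getD_eq_default _ _ (le_of_not_gt h)]
        apply Finset.sum_eq_zero
        intro b hb
        rw [Polynomial.coeff_monomial, if_neg]
        intro hc
        exact h (hc ▸ Finset.mem_range.mp hb)
    have hTrange : ∀ s ∈ T, ∃ j : ℕ, f.coeff j = s := by
      intro s hs
      have : s ∈ l := Finset.mem_toList.mpr hs
      obtain ⟨j, hj⟩ := List.mem_iff_get.mp this
      exact ⟨j, by rw [hcoeff, List.getD_eq_get l 0 j]; exact hj⟩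
    have hIcont : polyContent f = I := by
      rw [← hT]
      apply le_antisymm <;> rw [polyContent, Ideal.span_le]
      · rintro _ ⟨j, rfl⟩
        rw [hcoeff]
        by_cases h : j < l.length
        · exact Ideal.subset_span (by
            rw [List.getD_eq_get l 0 ⟨j, h⟩]
            exact Finset.mem_coe.mpr (Finset.mem_toList.mp (l.get_mem ⟨j, h⟩)))
        · rw [List.getD_eq_default _ _ (le_of_not_gt h)]
          exact (Ideal.span _).zero_mem
      · intro s hs
        obtain ⟨j, hj⟩ := hTrange s (Finset.mem_coe.mp hs)
        exact Ideal.subset_span ⟨j, hj⟩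
    have hnot : ¬∃ s ∈ polyContent f, s ∉ zdSet S M := by
      rintro ⟨s, hs, hns⟩
      exact hns (hsub (hIcont ▸ hs))
    have hnreg : ¬∀ g : ℕ →₀ M, g ≠ 0 → polyAct f g ≠ 0 := fun h => hnot ((hiff f).mp h)
    push_neg at hnreg
    obtain ⟨g, hg, hfg⟩ := hnreg
    obtain ⟨m, hm, hann⟩ := mccoy f (g.support.sup id) g hg le_rfl hfg
    refine ⟨m, hm, fun s hs => ?_⟩
    have hle : I ≤ annIdeal m := by
      rw [← hIcont, polyContent, Ideal.span_le]
      rintro _ ⟨n, rfl⟩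
      exact hann n
    exact hle hs
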